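/- A transitive permutation group G on a finite set Ω is primitive if and only if it is both quasiprimitive and pre-primitive. -/

import Mathlib

open Equiv

variable {Ω : Type*}

/-- `G` is a transitive permutation group on `Ω`. -/
def IsTransitive (G : Subgroup (Perm Ω)) : Prop :=
  ∀ x y : Ω, ∃ g ∈ G, g x = y

/-- The partition (setoid) `r` of `Ω` is `G`-invariant. -/
def IsInvariantPartition (G : Subgroup (Perm Ω)) (r : Setoid Ω) : Prop :=
  ∀ g ∈ G, ∀ x y : Ω, r.r x y → r.r (g x) (g y)

/-- The partition `r` of `Ω` is the orbit partition of the permutation group `H`. -/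
def IsOrbitPartition (H : Subgroup (Perm Ω)) (r : Setoid Ω) : Prop :=
  ∀ x y : Ω, r.r x y ↔ ∃ h ∈ H, h x = y

/-- `G` is pre-primitive: every `G`-invariant partition is the orbit partition
of a subgroup of `G`. -/
def IsPrePrimitive (G : Subgroup (Perm Ω)) : Prop :=
  ∀ r : Setoid Ω, IsInvariantPartition G r → ∃ H ≤ G, IsOrbitPartition H r

/-- `N` is a normal subgroup of the permutation group `G`. -/
def IsNormalIn (N G : Subgroup (Perm Ω)) : Prop :=
  N ≤ G ∧ ∀ g ∈ G, ∀ n ∈ N, g * n * g⁻¹ ∈ N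


/-- `G` is primitive: the only `G`-invariant partitions are the trivial ones. -/
def IsPrimitivePerm (G : Subgroup (Perm Ω)) : Prop :=
  ∀ r : Setoid Ω, IsInvariantPartition G r → r = ⊥ ∨ r = ⊤

/-- `G` is quasiprimitive: every non-trivial normal subgroup is transitive. -/
def IsQuasiprimitive (G : Subgroup (Perm Ω)) : Prop :=
  ∀ N : Subgroup (Perm Ω), IsNormalIn N G → N = ⊥ ∨ IsTransitive N

theorem primitive_iff_quasiprimitive_and_preprimitive
    {Ω : Type*} [Fintype Ω] (G : Subgroup (Perm Ω)) (hG : IsTransitive G) :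
    IsPrimitivePerm G ↔ IsQuasiprimitive G ∧ IsPrePrimitive G := by
  constructor
  · intro hprim
    constructor
    · -- quasiprimitive
      intro N ⟨hNG, hnorm⟩
      -- orbit partition of N
      set r : Setoid Ω :=
        { r := fun x y => ∃ n ∈ N, n x = y
          iseqv := by
            refine ⟨fun x => ⟨1, N.one_mem, rfl⟩, ?_, ?_⟩
            · rintro x y ⟨n, hn, rfl⟩
              exact ⟨n⁻¹, N.inv_mem hn, n.symm_apply_apply x⟩
            · rintro x y z ⟨n, hn, rfl⟩ ⟨m, hm, rfl⟩
              exact ⟨m * n, N.mul_mem hm hn, rfl⟩ } with hr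
      have hinv : IsInvariantPartition G r := by
        rintro g hg x y ⟨n, hn, rfl⟩
        exact ⟨g * n * g⁻¹, hnorm g hg n hn, by simp⟩
      rcases hprim r hinv with h | h
      · left
        rw [Subgroup.eq_bot_iff_forall]
        intro n hn
        ext x
        have : r.r x (n x) := ⟨n, hn, rfl⟩
        rw [h] at this
        exact this.symm
      · right
        intro x y
        have : r.r x y := by rw [h]; trivial
        exact this
    · -- preprimitive
      intro r hinv
      rcases hprim r hinv with h | h
      · refine ⟨⊥, bot_le, fun x y => ?_⟩
        subst h
        constructor
        · rintro rfl; exact ⟨1, Subgroup.mem_bot.2 rfl, rfl⟩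
        · rintro ⟨h, hh, rfl⟩
          rw [Subgroup.mem_bot] at hh
          subst hh; rfl
      · refine ⟨G, le_rfl, fun x y => ?_⟩
        subst h
        exact ⟨fun _ => hG x y, fun _ => trivial⟩
  · rintro ⟨hquasi, hpre⟩ r hinv
    obtain ⟨H, hHG, hOrb⟩ := hpre r hinv
    -- the block kernel
    set N : Subgroup (Perm Ω) :=
      { carrier := {g | g ∈ G ∧ ∀ x, r.r (g x) x}
        one_mem' := ⟨G.one_mem, fun x => r.refl x⟩
        mul_mem' := by
          rintro a b ⟨haG, ha⟩ ⟨hbG, hb⟩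
          exact ⟨G.mul_mem haG hbG, fun x => r.trans (ha (b x)) (hb x)⟩
        inv_mem' := by
          rintro a ⟨haG, ha⟩
          refine ⟨G.inv_mem haG, fun x => ?_⟩
          have := ha (a⁻¹ x)
          rw [show a (a⁻¹ x) = x from a.apply_symm_apply x] at this
          exact r.symm this } with hN
    have hNnorm : IsNormalIn N G := by
      refine ⟨fun g hg => hg.1, ?_⟩
      rintro g hg n ⟨hnG, hn⟩
      refine ⟨G.mul_mem (G.mul_mem hg hnG) (G.inv_mem hg), fun x => ?_⟩
      have h1 : r.r (g (n (g⁻¹ x))) (g (g⁻¹ x)) :=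
        hinv g hg _ _ (hn (g⁻¹ x))
      rw [show g (g⁻¹ x) = x from g.apply_symm_apply x] at h1
      simpa using h1
    have hHN : H ≤ N := by
      intro h hh
      exact ⟨hHG hh, fun x => r.symm ((hOrb x (h x)).2 ⟨h, hh, rfl⟩)⟩
    rcases hquasi N hNnorm with h | h
    · left
      refine Setoid.ext fun x y => ?_
      rw [hOrb x y]
      constructor
      · rintro ⟨k, hk, rfl⟩
        have := hHN hk
        rw [h, Subgroup.mem_bot] at this
        subst this; rfl
      · rintro rfl; exact ⟨1, H.one_mem, rfl⟩
    · right
      refine Setoid.ext fun x y => ?_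
      constructor
      · intro _; trivial
      · intro _
        obtain ⟨n, hn, rfl⟩ := h x y
        exact r.symm (hn.2 x)
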